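/- For every ε ∈ (0, 1) there exist constants c > 0, C > 0 and τ₀ > 0 such that |Q(τ^{−1/3}·ζ)| ≤ C·e^{−c·τ^{−2/3}} for all 0 < τ < τ₀ and all ζ ∈ ℂ with Re(ζ²) ≥ 1 − ε and Re ζ < 0. -/

import Mathlib

open MeasureTheory Filter Topology

noncomputable section

/-- Q(ξ) = −(1/π) ∫ℝ log(1 − e^{−ξ²/2} e^{−t²/2})/(i·t − ξ) dt. -/
def Qf (ξ : ℂ) : ℂ :=
  -(1 / (Real.pi : ℂ)) *
    ∫ t : ℝ, Complex.log (1 - Complex.exp (-ξ ^ 2 / 2) * Complex.exp (-((t : ℂ) ^ 2) / 2)) /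
      (Complex.I * (t : ℂ) - ξ)

set_option maxHeartbeats 1000000 in
theorem statement14 (ε : ℝ) (hε0 : 0 < ε) (hε1 : ε < 1) :
    ∃ c > (0 : ℝ), ∃ C > (0 : ℝ), ∃ τ₀ > (0 : ℝ), ∀ τ : ℝ, 0 < τ → τ < τ₀ →
      ∀ ζ : ℂ, 1 - ε ≤ (ζ ^ 2).re → ζ.re < 0 →
        ‖Qf (((τ ^ (-(1 : ℝ) / 3) : ℝ) : ℂ) * ζ)‖ ≤
          C * Real.exp (-c * τ ^ (-(2 : ℝ) / 3)) := by
  have h1ε : (0:ℝ) < 1 - ε := by linarith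
  set a : ℝ := Real.sqrt (1 - ε) with ha_def
  have ha : 0 < a := Real.sqrt_pos.mpr h1ε
  set M : ℝ := max a⁻¹ (Real.sqrt (2 / (1 - ε))) with hM_def
  have hM : 0 < M := lt_of_lt_of_le (inv_pos.mpr ha) (le_max_left _ _)
  refine ⟨(1 - ε) / 2, by linarith, 6, by norm_num, M ^ (-3 : ℝ), Real.rpow_pos_of_pos hM _,
    ?_⟩
  intro τ hτ hττ₀ ζ hζ2 hζre
  set u : ℝ := τ ^ (-(1:ℝ) / 3) with hu_def
  have hu0 : 0 < u := Real.rpow_pos_of_pos hτ _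
  -- u ≥ M
  have huM : M ≤ u := by
    have h1 : (M ^ (-3:ℝ)) ^ (-(1:ℝ)/3) < τ ^ (-(1:ℝ)/3) :=
      Real.rpow_lt_rpow_of_neg hτ hττ₀ (by norm_num)
    have h2 : (M ^ (-3:ℝ)) ^ (-(1:ℝ)/3) = M := by
      rw [← Real.rpow_mul hM.le]
      norm_num
    rw [h2] at h1
    exact h1.le
  have hua : 1 ≤ u * a := by
    have : a⁻¹ ≤ u := le_trans (le_max_left _ _) huM
    calc (1:ℝ) = a⁻¹ * a := by field_simp
    _ ≤ u * a := by gcongr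
  have hub : 2 / (1 - ε) ≤ u ^ 2 := by
    have h1 : Real.sqrt (2 / (1 - ε)) ≤ u := le_trans (le_max_right _ _) huM
    calc 2 / (1 - ε) = Real.sqrt (2 / (1 - ε)) ^ 2 := by
          rw [Real.sq_sqrt]; positivity
      _ ≤ u ^ 2 := by gcongr
  have hu2 : 2 ≤ u ^ 2 * (1 - ε) := by
    rw [div_le_iff₀ h1ε] at hub; linarith
  -- u^2 = τ^{-2/3}
  have hu2τ : u ^ 2 = τ ^ (-(2:ℝ)/3) := by
    rw [hu_def, ← Real.rpow_natCast (τ ^ (-(1:ℝ)/3)) 2, ← Real.rpow_mul hτ.le]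
    norm_num
  set ξ : ℂ := ((u : ℝ) : ℂ) * ζ with hξ_def
  -- real part of ξ²
  have hξ2re : (ξ ^ 2).re = u ^ 2 * (ζ ^ 2).re := by
    have : ξ ^ 2 = ((u ^ 2 : ℝ) : ℂ) * ζ ^ 2 := by push_cast; ring
    rw [this, Complex.mul_re, Complex.ofReal_re, Complex.ofReal_im]
    ring
  have hξ2 : 2 ≤ (ξ ^ 2).re := by
    rw [hξ2re]
    calc (2:ℝ) ≤ u ^ 2 * (1 - ε) := hu2
      _ ≤ u ^ 2 * (ζ ^ 2).re := by gcongr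
  -- the constant w
  set w : ℂ := Complex.exp (-ξ ^ 2 / 2) with hw_def
  have hwabs : ‖w‖ = Real.exp (-(ξ ^ 2).re / 2) := by
    rw [hw_def, Complex.norm_exp]
    congr 1
    simp [Complex.div_re]
  have hwhalf : ‖w‖ ≤ 1 / 2 := by
    rw [hwabs]
    calc Real.exp (-(ξ ^ 2).re / 2) ≤ Real.exp (-1) := by
          apply Real.exp_le_exp.mpr; linarith
      _ ≤ 1 / 2 := by
          rw [Real.exp_neg]
          have h2e : (2:ℝ) ≤ Real.exp 1 := by linarith [Real.add_one_le_exp 1]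
          have h3 := inv_anti₀ (by norm_num : (0:ℝ) < 2) h2e
          rw [show (1:ℝ)/2 = 2⁻¹ by norm_num]
          exact h3
  -- lower bound for the real part of ζ
  have hζrea : a ≤ -ζ.re := by
    have h1 : 1 - ε ≤ ζ.re ^ 2 := by
      have := hζ2
      rw [sq, Complex.mul_re] at this
      nlinarith [sq_nonneg ζ.im]
    calc a ≤ Real.sqrt (ζ.re ^ 2) := Real.sqrt_le_sqrt h1
      _ = |ζ.re| := Real.sqrt_sq_eq_abs _
      _ = -ζ.re := abs_of_neg hζre
  -- pointwise bound
  have hpt : ∀ t : ℝ,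
      ‖Complex.log (1 - w * Complex.exp (-((t : ℂ) ^ 2) / 2)) /
        (Complex.I * (t : ℂ) - ξ)‖ ≤
      2 * ‖w‖ * Real.exp (-(1/2) * t ^ 2) := by
    intro t
    have habs_t : ‖Complex.exp (-((t:ℂ) ^ 2) / 2)‖ = Real.exp (-(1/2) * t ^ 2) := by
      rw [Complex.norm_exp]
      congr 1
      have : (-((t:ℂ) ^ 2) / 2) = ((-(1/2) * t ^ 2 : ℝ) : ℂ) := by push_cast; ring
      rw [this, Complex.ofReal_re]
    set z : ℂ := w * Complex.exp (-((t:ℂ) ^ 2) / 2) with hz_def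
    have hzabs : ‖z‖ = ‖w‖ * Real.exp (-(1/2) * t ^ 2) := by
      rw [hz_def, norm_mul, habs_t]
    have hzhalf : ‖z‖ ≤ 1 / 2 := by
      rw [hzabs]
      calc ‖w‖ * Real.exp (-(1/2) * t ^ 2) ≤ (1/2) * 1 := by
            apply mul_le_mul hwhalf _ (Real.exp_nonneg _) (by norm_num)
            rw [Real.exp_le_one_iff]; nlinarith [sq_nonneg t]
        _ = 1/2 := by norm_num
    have hlog : ‖Complex.log (1 - z)‖ ≤ 2 * ‖w‖ * Real.exp (-(1/2) * t ^ 2) := by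
      have h1 : (1 : ℂ) - z = 1 + (-z) := by ring
      rw [h1]
      calc ‖Complex.log (1 + (-z))‖ ≤ (3/2) * ‖-z‖ :=
            Complex.norm_log_one_add_half_le_self (by rwa [norm_neg])
        _ = (3/2) * ‖z‖ := by rw [norm_neg]
        _ ≤ 2 * (‖w‖ * Real.exp (-(1/2) * t ^ 2)) := by
            rw [hzabs]; nlinarith [norm_nonneg w,
              Real.exp_nonneg (-(1/2) * t ^ 2)]
        _ = 2 * ‖w‖ * Real.exp (-(1/2) * t ^ 2) := by ring
    have hden : 1 ≤ ‖Complex.I * (t:ℂ) - ξ‖ := by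
      have hre : (Complex.I * (t:ℂ) - ξ).re = -(u * ζ.re) := by
        simp [hξ_def, Complex.mul_re]
      calc (1:ℝ) ≤ u * a := hua
        _ ≤ u * (-ζ.re) := by gcongr
        _ = |(Complex.I * (t:ℂ) - ξ).re| := by
            rw [hre, abs_of_nonneg (show (0:ℝ) ≤ -(u * ζ.re) by nlinarith)]; ring
        _ ≤ ‖Complex.I * (t:ℂ) - ξ‖ := Complex.abs_re_le_norm _
        _ = ‖Complex.I * (t:ℂ) - ξ‖ := rfl
    rw [norm_div]
    calc ‖Complex.log (1 - z)‖ / ‖Complex.I * (t:ℂ) - ξ‖ ≤ ‖Complex.log (1 - z)‖ / 1 := by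
          apply div_le_div_of_nonneg_left (norm_nonneg _) one_pos hden
      _ = ‖Complex.log (1 - z)‖ := by rw [div_one]
      _ ≤ _ := hlog
  -- integrability of the dominating function
  have hgint : Integrable (fun t : ℝ => 2 * ‖w‖ * Real.exp (-(1/2) * t ^ 2)) := by
    exact (integrable_exp_neg_mul_sq (by norm_num : (0:ℝ) < 1/2)).const_mul _
  -- bound the integral
  have hint : ‖∫ t : ℝ, Complex.log (1 - w * Complex.exp (-((t : ℂ) ^ 2) / 2)) /
      (Complex.I * (t : ℂ) - ξ)‖ ≤ 2 * ‖w‖ * Real.sqrt (2 * Real.pi) := by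
    calc ‖∫ t : ℝ, Complex.log (1 - w * Complex.exp (-((t : ℂ) ^ 2) / 2)) /
        (Complex.I * (t : ℂ) - ξ)‖
        ≤ ∫ t : ℝ, 2 * ‖w‖ * Real.exp (-(1/2) * t ^ 2) :=
          norm_integral_le_of_norm_le hgint (Eventually.of_forall hpt)
      _ = 2 * ‖w‖ * ∫ t : ℝ, Real.exp (-(1/2) * t ^ 2) := by
          rw [integral_const_mul]
      _ = 2 * ‖w‖ * Real.sqrt (Real.pi / (1/2)) := by
          rw [integral_gaussian]
      _ = 2 * ‖w‖ * Real.sqrt (2 * Real.pi) := by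
          congr 2; ring
  -- put everything together
  have hQ : ‖Qf ξ‖ ≤ (1 / Real.pi) * (2 * ‖w‖ * Real.sqrt (2 * Real.pi)) := by
    rw [Qf, norm_mul]
    have h1 : ‖-(1 / (Real.pi : ℂ))‖ = 1 / Real.pi := by
      rw [norm_neg]
      rw [norm_div]
      simp [abs_of_pos Real.pi_pos]
    rw [h1]
    apply mul_le_mul_of_nonneg_left _ (by positivity)
    exact hint
  have hsqrt : Real.sqrt (2 * Real.pi) ≤ 3 := by
    rw [show (3:ℝ) = Real.sqrt 9 by rw [show (9:ℝ) = 3 ^ 2 by norm_num, Real.sqrt_sq]; norm_num]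
    apply Real.sqrt_le_sqrt
    nlinarith [Real.pi_lt_d2]
  have hπ1 : 1 / Real.pi ≤ 1 := by
    rw [div_le_one Real.pi_pos]
    linarith [Real.pi_gt_three]
  have hwfinal : ‖w‖ ≤ Real.exp (-((1 - ε)/2) * τ ^ (-(2:ℝ)/3)) := by
    rw [hwabs]
    apply Real.exp_le_exp.mpr
    rw [← hu2τ, hξ2re]
    nlinarith [hu2, sq_nonneg u, mul_le_mul_of_nonneg_left hζ2 (sq_nonneg u)]
  calc ‖Qf ξ‖ ≤ (1 / Real.pi) * (2 * ‖w‖ * Real.sqrt (2 * Real.pi)) := hQ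
    _ ≤ 1 * (2 * ‖w‖ * 3) := by
        apply mul_le_mul hπ1 _ (by positivity) (by norm_num)
        apply mul_le_mul_of_nonneg_left hsqrt (by positivity)
    _ = 6 * ‖w‖ := by ring
    _ ≤ 6 * Real.exp (-((1 - ε)/2) * τ ^ (-(2:ℝ)/3)) := by gcongr
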